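/- For any d ≥ 3 and k ≥ 1, P(dk + d − 1, d) ≥ ((k+1)^d − C(k+d−1, d−1)) · P(dk − 1, d), where C(k+d−1, d−1) is the binomial coefficient. -/

import Mathlib

/-- The Chebyshev distance between two permutations of `{1,…,n}`
(represented as permutations of `Fin n`): `max_i |σ(i) − τ(i)|`. -/
def permDist {n : ℕ} (σ τ : Equiv.Perm (Fin n)) : ℕ :=
  Finset.univ.sup fun i => Nat.dist (σ i : ℕ) (τ i : ℕ)

/-- `P n d` is the maximum cardinality of a set of permutations of `{1,…,n}`
whose pairwise Chebyshev distance is at least `d`. -/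
noncomputable def P (n d : ℕ) : ℕ :=
  sSup {k | ∃ A : Finset (Equiv.Perm (Fin n)),
    (∀ σ ∈ A, ∀ τ ∈ A, σ ≠ τ → d ≤ permDist σ τ) ∧ A.card = k}

namespace Stmt9Aux

attribute [local instance] Classical.propDecidable

/-- DP for longest nondecreasing subsequence of `f 0, ..., f (j-1)` with values `≤ y`. -/
def L (f : ℕ → ℕ) : ℕ → ℕ → ℕ
  | 0, _ => 0
  | j+1, y => max (L f j y) (if f j ≤ y then L f j (f j) + 1 else 0)

lemma L_le (f : ℕ → ℕ) : ∀ j y, L f j y ≤ j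
  | 0, _ => le_refl 0
  | j+1, y => by
    simp only [L]
    rcases le_or_gt (f j) y with h | h
    · rw [if_pos h]
      exact max_le (le_trans (L_le f j y) (Nat.le_succ j))
        (Nat.succ_le_succ (L_le f j (f j)))
    · rw [if_neg (not_le.mpr h)]
      exact max_le (le_trans (L_le f j y) (Nat.le_succ j)) (Nat.zero_le _)

lemma L_mono_y (f : ℕ → ℕ) : ∀ j {y y'}, y ≤ y' → L f j y ≤ L f j y'
  | 0, _, _, _ => le_refl 0
  | j+1, y, y', h => by
    simp only [L]
    apply max_le_max (L_mono_y f j h)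
    rcases le_or_gt (f j) y with h1 | h1
    · rw [if_pos h1, if_pos (le_trans h1 h)]
    · rw [if_neg (not_le.mpr h1)]
      exact Nat.zero_le _

lemma L_le_succ (f : ℕ → ℕ) (j y : ℕ) : L f j y ≤ L f (j+1) y := le_max_left _ _

lemma L_mono_j (f : ℕ → ℕ) {j j' : ℕ} (h : j ≤ j') (y : ℕ) : L f j y ≤ L f j' y := by
  induction j' with
  | zero =>
    have : j = 0 := by omega
    subst this; exact le_refl _
  | succ n ih =>
    rcases Nat.le_succ_iff.mp h with h' | h'
    · exact le_trans (ih h') (L_le_succ f n y)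
    · subst h'; exact le_refl _

lemma L_push (f : ℕ → ℕ) {i y : ℕ} (h : f i ≤ y) : L f i (f i) + 1 ≤ L f (i+1) y := by
  simp only [L]
  rw [if_pos h]
  exact le_max_right _ _

lemma L_congr {f g : ℕ → ℕ} : ∀ j, (∀ i, i < j → f i = g i) → ∀ y, L f j y = L g j y
  | 0, _, _ => rfl
  | j+1, h, y => by
    simp only [L]
    rw [L_congr j (fun i hi => h i (by omega)) y, h j (by omega),
      L_congr j (fun i hi => h i (by omega)) (g j)]

lemma L_max {f : ℕ → ℕ} : ∀ {j y}, L f j y = j →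
    (∀ i, i < j → f i ≤ y) ∧ (∀ i, i + 1 < j → f i ≤ f (i+1)) := by
  intro j
  induction j with
  | zero => intro y _; exact ⟨fun i hi => absurd hi (by omega), fun i hi => absurd hi (by omega)⟩
  | succ j ih =>
    intro y h
    have h1 : L f j y ≤ j := L_le f j y
    have h2 : (if f j ≤ y then L f j (f j) + 1 else 0) = j + 1 := by
      simp only [L] at h
      omega
    rcases le_or_gt (f j) y with hfy | hfy
    · rw [if_pos hfy] at h2
      have h3 : L f j (f j) = j := by omega
      obtain ⟨hle, hadj⟩ := ih h3
      constructor
      · intro i hi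
        rcases Nat.lt_succ_iff_lt_or_eq.mp hi with hi' | hi'
        · exact le_trans (hle i hi') hfy
        · subst hi'; exact hfy
      · intro i hi
        rcases Nat.lt_succ_iff_lt_or_eq.mp hi with hi' | hi'
        · exact hadj i hi'
        · have hij : i < j := by omega
          have := hle i hij
          have hj : i + 1 = j := by omega
          rw [hj]
          exact this
    · rw [if_neg (not_le.mpr hfy)] at h2
      omega


variable (d k : ℕ)

/-- The levels of an index vector, as a total function on `ℕ`. -/
def aN (a : Fin d → Fin (k+1)) (i : ℕ) : ℕ := if h : i < d then (a ⟨i, h⟩ : ℕ) else 0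

lemma aN_le (a : Fin d → Fin (k+1)) (i : ℕ) : aN d k a i ≤ k := by
  unfold aN
  split
  · exact Nat.lt_succ_iff.mp (Fin.is_lt _)
  · exact Nat.zero_le _

/-- The value tuple. -/
def fv (a : Fin d → Fin (k+1)) (j : ℕ) : ℕ :=
  d * aN d k a j + L (aN d k a) j (aN d k a j)

/-- Excluded ("bad") index vectors: nondecreasing ones ending at level `k`. -/
def Bad (a : Fin d → Fin (k+1)) : Prop :=
  (∀ i, i + 1 < d → aN d k a i ≤ aN d k a (i+1)) ∧ aN d k a (d-1) = k

lemma Bad_mono {a : Fin d → Fin (k+1)} (hBad : Bad d k a) :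
    ∀ t i, i + t < d → aN d k a i ≤ aN d k a (i + t) := by
  intro t
  induction t with
  | zero => intro i _; exact le_refl _
  | succ t ih =>
    intro i h
    have h1 : aN d k a i ≤ aN d k a (i + t) := ih i (by omega)
    have h2 : aN d k a (i + t) ≤ aN d k a (i + t + 1) := hBad.1 (i + t) (by omega)
    have : i + (t + 1) = i + t + 1 := by omega
    rw [this]
    exact le_trans h1 h2

lemma fv_lt (hd : 3 ≤ d) (hk : 1 ≤ k) {a : Fin d → Fin (k+1)} (ha : ¬ Bad d k a)
    {j : ℕ} (hj : j < d) : fv d k a j < d * k + d - 1 := by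
  have hdk : 3 ≤ d * k := le_trans hd (Nat.le_mul_of_pos_right d (by omega))
  have hL : L (aN d k a) j (aN d k a j) ≤ j := L_le _ _ _
  have haj : aN d k a j ≤ k := aN_le d k a j
  have hmul : d * aN d k a j ≤ d * k := Nat.mul_le_mul_left d haj
  unfold fv
  by_cases hj1 : j + 1 < d
  · omega
  · -- j = d - 1
    have hjd : j = d - 1 := by omega
    by_cases hak : aN d k a j = k
    · -- need L ≤ d - 2
      by_cases hLs : L (aN d k a) j (aN d k a j) = j
      · exfalso
        apply ha
        obtain ⟨hle, hadj⟩ := L_max hLs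
        constructor
        · intro i hi
          by_cases hi1 : i + 1 < j
          · exact hadj i hi1
          · have : i + 1 = j := by omega
            rw [this, hjd]
            calc aN d k a i ≤ k := aN_le d k a i
              _ = aN d k a (d-1) := by rw [← hjd, hak]
        · rw [← hjd]; exact hak
      · omega
    · -- aN a j ≤ k - 1
      have h1 : aN d k a j + 1 ≤ k := by omega
      have h2 : d * (aN d k a j + 1) ≤ d * k := Nat.mul_le_mul_left d h1
      have h3 : d * (aN d k a j + 1) = d * aN d k a j + d := by ring
      omega

lemma fv_inj (a : Fin d → Fin (k+1)) {i j : ℕ} (hij : i < j) (hjd : j < d) :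
    fv d k a i ≠ fv d k a j := by
  have hLi : L (aN d k a) i (aN d k a i) ≤ i := L_le _ _ _
  have hLj : L (aN d k a) j (aN d k a j) ≤ j := L_le _ _ _
  unfold fv
  rcases lt_trichotomy (aN d k a i) (aN d k a j) with h | h | h
  · -- strictly smaller level
    have h2 : d * (aN d k a i + 1) ≤ d * aN d k a j := Nat.mul_le_mul_left d (by omega)
    have h3 : d * (aN d k a i + 1) = d * aN d k a i + d := by ring
    omega
  · -- equal levels: residues differ
    have h1 : L (aN d k a) i (aN d k a i) + 1 ≤ L (aN d k a) (i+1) (aN d k a j) := by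
      apply L_push
      rw [h]
    have h2 : L (aN d k a) (i+1) (aN d k a j) ≤ L (aN d k a) j (aN d k a j) :=
      L_mono_j _ (by omega) _
    rw [h] at h1 ⊢
    omega
  · have h2 : d * (aN d k a j + 1) ≤ d * aN d k a i := Nat.mul_le_mul_left d (by omega)
    have h3 : d * (aN d k a j + 1) = d * aN d k a j + d := by ring
    omega

lemma fv_sep_one {a b : Fin d → Fin (k+1)} {j0 : ℕ}
    (hpre : ∀ i, i < j0 → aN d k a i = aN d k b i)
    (hlt : aN d k a j0 < aN d k b j0) (hj0 : j0 < d) :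
    fv d k a j0 + d ≤ fv d k b j0 := by
  have hL : ∀ y, L (aN d k a) j0 y = L (aN d k b) j0 y := fun y => L_congr j0 hpre y
  have h1 : L (aN d k b) j0 (aN d k a j0) ≤ L (aN d k b) j0 (aN d k b j0) :=
    L_mono_y _ j0 (le_of_lt hlt)
  have h2 : L (aN d k a) j0 (aN d k a j0) = L (aN d k b) j0 (aN d k a j0) := hL _
  have h3 : d * (aN d k a j0 + 1) ≤ d * aN d k b j0 := Nat.mul_le_mul_left d (by omega)
  have h4 : d * (aN d k a j0 + 1) = d * aN d k a j0 + d := by ring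
  unfold fv
  omega

lemma fv_sep {a b : Fin d → Fin (k+1)} (hne : ∃ i, i < d ∧ aN d k a i ≠ aN d k b i) :
    ∃ j, j < d ∧ (fv d k a j + d ≤ fv d k b j ∨ fv d k b j + d ≤ fv d k a j) := by
  have hex : ∃ j, aN d k a j ≠ aN d k b j := by
    obtain ⟨i, _, h⟩ := hne; exact ⟨i, h⟩
  classical
  let j0 := Nat.find hex
  have hj0P : aN d k a j0 ≠ aN d k b j0 := Nat.find_spec hex
  have hpre : ∀ i, i < j0 → aN d k a i = aN d k b i := by
    intro i hi
    by_contra hcon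
    exact absurd (Nat.find_min hex hi) (by simp [hcon])
  have hj0d : j0 < d := by
    obtain ⟨i, hid, hi⟩ := hne
    exact lt_of_le_of_lt (Nat.find_min' hex hi) hid
  refine ⟨j0, hj0d, ?_⟩
  rcases lt_or_gt_of_ne hj0P with h | h
  · exact Or.inl (fv_sep_one d k hpre h hj0d)
  · exact Or.inr (fv_sep_one d k (fun i hi => (hpre i hi).symm) h hj0d)


lemma aN_val {a : Fin d → Fin (k+1)} (x : Fin d) : aN d k a (x : ℕ) = (a x : ℕ) := by
  unfold aN
  rw [dif_pos x.isLt]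

lemma card_Bad_le (hd : 3 ≤ d) (hk : 1 ≤ k) :
    (Finset.univ.filter (fun a : Fin d → Fin (k+1) => Bad d k a)).card ≤
      Nat.choose (k + d - 1) (d - 1) := by
  classical
  have hvalpf : ∀ (a : Fin d → Fin (k+1)) (i : Fin (d-1)), aN d k a i + i < k + d - 1 := by
    intro a i
    have h1 := aN_le d k a i
    have h2 := i.isLt
    omega
  set ψ : (Fin d → Fin (k+1)) → Finset (Fin (k + d - 1)) :=
    fun a => Finset.univ.image (fun i : Fin (d-1) => (⟨aN d k a i + i, hvalpf a i⟩ : Fin (k+d-1)))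
    with hψ
  have hmono : ∀ a : Fin d → Fin (k+1), Bad d k a →
      StrictMono (fun i : Fin (d-1) => (⟨aN d k a i + i, hvalpf a i⟩ : Fin (k+d-1))) := by
    intro a hBad i j hij
    have h1 : (i:ℕ) < (j:ℕ) := hij
    have h2 : aN d k a i ≤ aN d k a j := by
      have := Bad_mono d k hBad ((j:ℕ) - (i:ℕ)) i (by have := j.isLt; omega)
      have heq : (i:ℕ) + ((j:ℕ) - (i:ℕ)) = (j:ℕ) := by omega
      rwa [heq] at this
    show (⟨aN d k a i + i, _⟩ : Fin (k+d-1)) < ⟨aN d k a j + j, _⟩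
    simp only [Fin.mk_lt_mk]
    omega
  have hcardψ : ∀ a : Fin d → Fin (k+1), Bad d k a → (ψ a).card = d - 1 := by
    intro a hBad
    rw [hψ]
    simp only
    rw [Finset.card_image_of_injective _ (hmono a hBad).injective, Finset.card_univ,
      Fintype.card_fin]
  have hstep : (Finset.univ.filter (fun a : Fin d → Fin (k+1) => Bad d k a)).card ≤
      ((Finset.univ : Finset (Fin (k+d-1))).powersetCard (d-1)).card := by
    apply Finset.card_le_card_of_injOn ψ
    · intro a ha
      have hBad : Bad d k a := (Finset.mem_filter.mp ha).2
      rw [Finset.mem_coe, Finset.mem_powersetCard]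
      exact ⟨Finset.subset_univ _, hcardψ a hBad⟩
    · intro a ha b hb heq
      have hBa : Bad d k a := (Finset.mem_filter.mp ha).2
      have hBb : Bad d k b := (Finset.mem_filter.mp hb).2
      have hcard : (ψ a).card = d - 1 := hcardψ a hBa
      have h1 : (fun i : Fin (d-1) => (⟨aN d k a i + i, hvalpf a i⟩ : Fin (k+d-1)))
          = (ψ a).orderEmbOfFin hcard := by
        apply Finset.orderEmbOfFin_unique
        · intro x
          rw [hψ]
          exact Finset.mem_image_of_mem _ (Finset.mem_univ x)
        · exact hmono a hBa
      have h2 : (fun i : Fin (d-1) => (⟨aN d k b i + i, hvalpf b i⟩ : Fin (k+d-1)))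
          = (ψ a).orderEmbOfFin hcard := by
        apply Finset.orderEmbOfFin_unique
        · intro x
          rw [heq, hψ]
          exact Finset.mem_image_of_mem _ (Finset.mem_univ x)
        · exact hmono b hBb
      have h3 : ∀ i : Fin (d-1), aN d k a i = aN d k b i := by
        intro i
        have := congrFun (h1.trans h2.symm) i
        simp only [Fin.mk.injEq] at this
        omega
      funext x
      have hx := x.isLt
      by_cases hxd : (x:ℕ) < d - 1
      · have := h3 ⟨(x:ℕ), hxd⟩
        simp only at this
        rw [aN_val d k x, aN_val d k x] at this
        exact Fin.val_injective this
      · have hxe : (x:ℕ) = d - 1 := by omega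
        have hav : (a x : ℕ) = k := by
          have := hBa.2
          rw [← hxe, aN_val d k x] at this
          exact this
        have hbv : (b x : ℕ) = k := by
          have := hBb.2
          rw [← hxe, aN_val d k x] at this
          exact this
        exact Fin.val_injective (hav.trans hbv.symm)
  calc (Finset.univ.filter (fun a : Fin d → Fin (k+1) => Bad d k a)).card
      ≤ ((Finset.univ : Finset (Fin (k+d-1))).powersetCard (d-1)).card := hstep
    _ = Nat.choose (k + d - 1) (d - 1) := by
        rw [Finset.card_powersetCard, Finset.card_univ, Fintype.card_fin]


/-- The finset of tuple values. -/
def Fvals (a : Fin d → Fin (k+1)) : Finset (Fin (d*k+d-1)) :=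
  Finset.univ.filter (fun v => ∃ j, j < d ∧ fv d k a j = (v : ℕ))

lemma mem_Fvals {a : Fin d → Fin (k+1)} {v : Fin (d*k+d-1)} :
    v ∈ Fvals d k a ↔ ∃ j, j < d ∧ fv d k a j = (v : ℕ) := by
  unfold Fvals
  simp [Finset.mem_filter]

lemma card_Fvals (hd : 3 ≤ d) (hk : 1 ≤ k) {a : Fin d → Fin (k+1)} (ha : ¬ Bad d k a) :
    (Fvals d k a).card = d := by
  have heq : Fvals d k a = Finset.univ.image
      (fun j : Fin d => (⟨fv d k a j, fv_lt d k hd hk ha j.isLt⟩ : Fin (d*k+d-1))) := by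
    ext v
    rw [mem_Fvals, Finset.mem_image]
    constructor
    · rintro ⟨j, hj, hfv⟩
      exact ⟨⟨j, hj⟩, Finset.mem_univ _, by apply Fin.val_injective; exact hfv⟩
    · rintro ⟨j, _, rfl⟩
      exact ⟨j, j.isLt, rfl⟩
  rw [heq]
  rw [Finset.card_image_of_injective, Finset.card_univ, Fintype.card_fin]
  intro i j hij
  by_contra hne
  simp only [Fin.mk.injEq] at hij
  rcases lt_trichotomy (i:ℕ) (j:ℕ) with h | h | h
  · exact fv_inj d k a h j.isLt hij
  · exact hne (Fin.val_injective h)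
  · exact fv_inj d k a h i.isLt hij.symm

lemma card_Cs (hd : 3 ≤ d) (hk : 1 ≤ k) {a : Fin d → Fin (k+1)} (ha : ¬ Bad d k a) :
    ((Fvals d k a)ᶜ).card = d*k-1 := by
  have hdk : 3 ≤ d * k := le_trans hd (Nat.le_mul_of_pos_right d (by omega))
  rw [Finset.card_compl, card_Fvals d k hd hk ha, Fintype.card_fin]
  omega

/-- Increasing enumeration of the complement of the tuple values. -/
noncomputable def gmap (hd : 3 ≤ d) (hk : 1 ≤ k) {a : Fin d → Fin (k+1)} (ha : ¬ Bad d k a) :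
    Fin (d*k-1) ↪o Fin (d*k+d-1) :=
  ((Fvals d k a)ᶜ).orderEmbOfFin (card_Cs d k hd hk ha)

lemma gmap_not_mem (hd : 3 ≤ d) (hk : 1 ≤ k) {a : Fin d → Fin (k+1)} (ha : ¬ Bad d k a)
    (x : Fin (d*k-1)) : gmap d k hd hk ha x ∉ Fvals d k a := by
  have := Finset.orderEmbOfFin_mem ((Fvals d k a)ᶜ) (card_Cs d k hd hk ha) x
  rw [Finset.mem_compl] at this
  exact this

/-- An order embedding between Fin types expands `Nat.dist`. -/
lemma orderEmb_expand {m n : ℕ} (f : Fin m ↪o Fin n) (x y : Fin m) :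
    Nat.dist (x:ℕ) (y:ℕ) ≤ Nat.dist (f x : ℕ) (f y : ℕ) := by
  have aux : ∀ (t : ℕ) (x y : Fin m), (x:ℕ) + t = (y:ℕ) → (f x : ℕ) + t ≤ (f y : ℕ) := by
    intro t
    induction t with
    | zero =>
      intro x y h
      have : x = y := Fin.val_injective (by omega)
      rw [this]
      omega
    | succ t ih =>
      intro x y h
      have hx' : (x:ℕ) + t < m := by have := y.isLt; omega
      set x' : Fin m := ⟨(x:ℕ) + t, hx'⟩
      have h1 : (f x : ℕ) + t ≤ (f x' : ℕ) := ih x x' rfl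
      have h2 : (f x' : ℕ) < (f y : ℕ) := by
        have : x' < y := by
          show ((x':Fin m) : ℕ) < (y:ℕ)
          simp only [x']
          omega
        exact f.strictMono this
      omega
  rcases le_total (x:ℕ) (y:ℕ) with h | h
  · have h1 := aux ((y:ℕ) - (x:ℕ)) x y (by omega)
    have h2 : (f x : ℕ) ≤ (f y : ℕ) := by omega
    rw [Nat.dist_eq_sub_of_le h, Nat.dist_eq_sub_of_le h2]
    omega
  · have h1 := aux ((x:ℕ) - (y:ℕ)) y x (by omega)
    have h2 : (f y : ℕ) ≤ (f x : ℕ) := by omega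
    rw [Nat.dist_comm, Nat.dist_comm (↑(f x)) (↑(f y)), Nat.dist_eq_sub_of_le h,
      Nat.dist_eq_sub_of_le h2]
    omega

lemma dkd (hd : 3 ≤ d) (hk : 1 ≤ k) : (d*k-1) + d = d*k+d-1 := by
  have hdk : 3 ≤ d * k := le_trans hd (Nat.le_mul_of_pos_right d (by omega))
  omega

/-- The permutation function. -/
noncomputable def phiFun (hd : 3 ≤ d) (hk : 1 ≤ k) (a : Fin d → Fin (k+1)) (ha : ¬ Bad d k a)
    (σ : Equiv.Perm (Fin (d*k-1))) : Fin (d*k+d-1) → Fin (d*k+d-1) := fun p =>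
  if h : (p : ℕ) < d*k-1 then gmap d k hd hk ha (σ ⟨(p:ℕ), h⟩)
  else ⟨fv d k a ((p:ℕ) - (d*k-1)),
    fv_lt d k hd hk ha (by have h2 := p.isLt; have h3 := dkd d k hd hk; omega)⟩

lemma phiFun_bij (hd : 3 ≤ d) (hk : 1 ≤ k) (a : Fin d → Fin (k+1)) (ha : ¬ Bad d k a)
    (σ : Equiv.Perm (Fin (d*k-1))) : Function.Bijective (phiFun d k hd hk a ha σ) := by
  have hinj : Function.Injective (phiFun d k hd hk a ha σ) := by
    intro p q hpq
    unfold phiFun at hpq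
    by_cases hp : (p:ℕ) < d*k-1 <;> by_cases hq : (q:ℕ) < d*k-1
    · rw [dif_pos hp, dif_pos hq] at hpq
      have h1 := (gmap d k hd hk ha).injective hpq
      have h2 := σ.injective h1
      have h3 : (p:ℕ) = (q:ℕ) := by
        have := congrArg Fin.val h2
        simpa using this
      exact Fin.val_injective h3
    · rw [dif_pos hp, dif_neg hq] at hpq
      exfalso
      apply gmap_not_mem d k hd hk ha (σ ⟨(p:ℕ), hp⟩)
      rw [hpq, mem_Fvals]
      exact ⟨(q:ℕ) - (d*k-1), by have := q.isLt; have := dkd d k hd hk; omega, rfl⟩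
    · rw [dif_neg hp, dif_pos hq] at hpq
      exfalso
      apply gmap_not_mem d k hd hk ha (σ ⟨(q:ℕ), hq⟩)
      rw [← hpq, mem_Fvals]
      exact ⟨(p:ℕ) - (d*k-1), by have := p.isLt; have := dkd d k hd hk; omega, rfl⟩
    · rw [dif_neg hp, dif_neg hq] at hpq
      simp only [Fin.mk.injEq] at hpq
      have hpd : (p:ℕ) - (d*k-1) < d := by have := p.isLt; have := dkd d k hd hk; omega
      have hqd : (q:ℕ) - (d*k-1) < d := by have := q.isLt; have := dkd d k hd hk; omega
      rcases lt_trichotomy ((p:ℕ) - (d*k-1)) ((q:ℕ) - (d*k-1)) with h | h | h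
      · exact absurd hpq (fv_inj d k a h hqd)
      · exact Fin.val_injective (by omega)
      · exact absurd hpq.symm (fv_inj d k a h hpd)
  exact ⟨hinj, Finite.surjective_of_injective hinj⟩

/-- The extended permutation. -/
noncomputable def Phi (hd : 3 ≤ d) (hk : 1 ≤ k) (a : Fin d → Fin (k+1)) (ha : ¬ Bad d k a)
    (σ : Equiv.Perm (Fin (d*k-1))) : Equiv.Perm (Fin (d*k+d-1)) :=
  Equiv.ofBijective _ (phiFun_bij d k hd hk a ha σ)

lemma Phi_apply (hd : 3 ≤ d) (hk : 1 ≤ k) (a : Fin d → Fin (k+1)) (ha : ¬ Bad d k a)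
    (σ : Equiv.Perm (Fin (d*k-1))) (p : Fin (d*k+d-1)) :
    Phi d k hd hk a ha σ p = phiFun d k hd hk a ha σ p := rfl


lemma dist_Phi_of_ne_a (hd : 3 ≤ d) (hk : 1 ≤ k) {a b : Fin d → Fin (k+1)}
    (ha : ¬ Bad d k a) (hb : ¬ Bad d k b) (σ τ : Equiv.Perm (Fin (d*k-1)))
    (hne : ∃ i, i < d ∧ aN d k a i ≠ aN d k b i) :
    d ≤ permDist (Phi d k hd hk a ha σ) (Phi d k hd hk b hb τ) := by
  obtain ⟨j0, hj0, hsep⟩ := fv_sep d k hne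
  have hdk := dkd d k hd hk
  set p : Fin (d*k+d-1) := ⟨(d*k-1) + j0, by omega⟩ with hp
  have hplt : ¬ ((p:ℕ) < d*k-1) := by simp [hp]
  have hsub : (p:ℕ) - (d*k-1) = j0 := by simp [hp]
  have hval : ∀ (c : Fin d → Fin (k+1)) (hc : ¬ Bad d k c) (ρ : Equiv.Perm (Fin (d*k-1))),
      ((Phi d k hd hk c hc ρ p : Fin (d*k+d-1)) : ℕ) = fv d k c j0 := by
    intro c hc ρ
    rw [Phi_apply]
    unfold phiFun
    rw [dif_neg hplt]
    simp [hsub]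
  have hd0 : d ≤ Nat.dist ((Phi d k hd hk a ha σ p : Fin (d*k+d-1)) : ℕ)
      ((Phi d k hd hk b hb τ p : Fin (d*k+d-1)) : ℕ) := by
    rw [hval a ha σ, hval b hb τ]
    unfold Nat.dist
    omega
  refine le_trans hd0 ?_
  unfold permDist
  exact Finset.le_sup
    (f := fun i => Nat.dist ((Phi d k hd hk a ha σ i : Fin (d*k+d-1)) : ℕ)
      ((Phi d k hd hk b hb τ i : Fin (d*k+d-1)) : ℕ)) (Finset.mem_univ p)

lemma dist_Phi_of_ne_σ (hd : 3 ≤ d) (hk : 1 ≤ k) {a : Fin d → Fin (k+1)}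
    (ha : ¬ Bad d k a) {σ τ : Equiv.Perm (Fin (d*k-1))}
    (h : d ≤ permDist σ τ) :
    d ≤ permDist (Phi d k hd hk a ha σ) (Phi d k hd hk a ha τ) := by
  have hdk := dkd d k hd hk
  obtain ⟨i, _, hi⟩ := (Finset.le_sup_iff (by omega : (0:ℕ) < d)).mp h
  set p : Fin (d*k+d-1) := ⟨(i:ℕ), by have := i.isLt; omega⟩ with hp
  have hplt : ((p:ℕ) < d*k-1) := i.isLt
  have hieq : (⟨(p:ℕ), hplt⟩ : Fin (d*k-1)) = i := by
    apply Fin.val_injective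
    simp [hp]
  have hval : ∀ (ρ : Equiv.Perm (Fin (d*k-1))),
      (Phi d k hd hk a ha ρ p : Fin (d*k+d-1)) = gmap d k hd hk ha (ρ i) := by
    intro ρ
    rw [Phi_apply]
    unfold phiFun
    rw [dif_pos hplt, hieq]
  have hd0 : d ≤ Nat.dist ((Phi d k hd hk a ha σ p : Fin (d*k+d-1)) : ℕ)
      ((Phi d k hd hk a ha τ p : Fin (d*k+d-1)) : ℕ) := by
    rw [hval σ, hval τ]
    exact le_trans hi (orderEmb_expand (gmap d k hd hk ha) (σ i) (τ i))
  refine le_trans hd0 ?_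
  unfold permDist
  exact Finset.le_sup
    (f := fun i => Nat.dist ((Phi d k hd hk a ha σ i : Fin (d*k+d-1)) : ℕ)
      ((Phi d k hd hk a ha τ i : Fin (d*k+d-1)) : ℕ)) (Finset.mem_univ p)

lemma permDist_self {n : ℕ} (σ : Equiv.Perm (Fin n)) : permDist σ σ = 0 := by
  unfold permDist
  apply Nat.le_antisymm _ (Nat.zero_le _)
  apply Finset.sup_le
  intro i _
  simp [Nat.dist_self]

lemma aN_ne_of_ne {a b : Fin d → Fin (k+1)} (hab : a ≠ b) :
    ∃ i, i < d ∧ aN d k a i ≠ aN d k b i := by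
  have : ∃ x : Fin d, a x ≠ b x := Function.ne_iff.mp hab
  obtain ⟨x, hx⟩ := this
  refine ⟨(x:ℕ), x.isLt, ?_⟩
  rw [aN_val d k x, aN_val d k x]
  exact fun hc => hx (Fin.val_injective hc)

end Stmt9Aux

open Stmt9Aux

/-- For any `d ≥ 3` and `k ≥ 1`,
`P(dk + d − 1, d) ≥ ((k+1)^d − C(k+d−1, d−1)) · P(dk − 1, d)`. -/
theorem stmt9 (d k : ℕ) (hd : 3 ≤ d) (hk : 1 ≤ k) :
    ((k + 1) ^ d - Nat.choose (k + d - 1) (d - 1)) * P (d * k - 1) d ≤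
      P (d * k + d - 1) d := by
  classical
  have hdk : 3 ≤ d * k := le_trans hd (Nat.le_mul_of_pos_right d (by omega))
  have hdkd : (d*k-1) + d = d*k+d-1 := dkd d k hd hk
  -- the defining set for P (d*k-1) d
  have hne : ({c | ∃ A : Finset (Equiv.Perm (Fin (d*k-1))),
      (∀ σ ∈ A, ∀ τ ∈ A, σ ≠ τ → d ≤ permDist σ τ) ∧ A.card = c} : Set ℕ).Nonempty := by
    refine ⟨0, ∅, ?_, rfl⟩
    intro σ hσ
    exact absurd hσ (Finset.notMem_empty σ)
  have hbdd : BddAbove ({c | ∃ A : Finset (Equiv.Perm (Fin (d*k-1))),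
      (∀ σ ∈ A, ∀ τ ∈ A, σ ≠ τ → d ≤ permDist σ τ) ∧ A.card = c} : Set ℕ) := by
    refine ⟨Fintype.card (Equiv.Perm (Fin (d*k-1))), ?_⟩
    rintro c ⟨A, _, rfl⟩
    exact le_trans (Finset.card_le_univ A) (le_of_eq Finset.card_univ)
  have hmem : P (d*k-1) d ∈ ({c | ∃ A : Finset (Equiv.Perm (Fin (d*k-1))),
      (∀ σ ∈ A, ∀ τ ∈ A, σ ≠ τ → d ≤ permDist σ τ) ∧ A.card = c} : Set ℕ) := by
    have : P (d*k-1) d = sSup {c | ∃ A : Finset (Equiv.Perm (Fin (d*k-1))),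
        (∀ σ ∈ A, ∀ τ ∈ A, σ ≠ τ → d ≤ permDist σ τ) ∧ A.card = c} := rfl
    rw [this]
    exact Nat.sSup_mem hne hbdd
  obtain ⟨A, hA, hAcard⟩ := hmem
  -- the construction
  set Tset : Finset (Fin d → Fin (k+1)) := Finset.univ.filter (fun a => ¬ Bad d k a) with hT
  set F : (Fin d → Fin (k+1)) × Equiv.Perm (Fin (d*k-1)) → Equiv.Perm (Fin (d*k+d-1)) :=
    fun x => if h : ¬ Bad d k x.1 then Phi d k hd hk x.1 h x.2 else 1 with hF
  set B : Finset (Equiv.Perm (Fin (d*k+d-1))) := (Tset ×ˢ A).image F with hB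
  have hmemT : ∀ {x : (Fin d → Fin (k+1)) × Equiv.Perm (Fin (d*k-1))},
      x ∈ Tset ×ˢ A → ¬ Bad d k x.1 ∧ x.2 ∈ A := by
    intro x hx
    have h1 := Finset.mem_product.mp hx
    exact ⟨(Finset.mem_filter.mp h1.1).2, h1.2⟩
  have hFval : ∀ (a : Fin d → Fin (k+1)) (σ : Equiv.Perm (Fin (d*k-1))) (hx : ¬ Bad d k a),
      F (a, σ) = Phi d k hd hk a hx σ := by
    intro a σ hx
    simp only [hF]
    rw [dif_pos hx]
  -- distance property of B
  have hBdist : ∀ σ' ∈ B, ∀ τ' ∈ B, σ' ≠ τ' → d ≤ permDist σ' τ' := by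
    intro σ' hσ' τ' hτ' hne'
    rw [hB] at hσ' hτ'
    obtain ⟨x, hx, rfl⟩ := Finset.mem_image.mp hσ'
    obtain ⟨y, hy, rfl⟩ := Finset.mem_image.mp hτ'
    obtain ⟨a, σ⟩ := x
    obtain ⟨b, τ⟩ := y
    obtain ⟨hbx, hax⟩ := hmemT hx
    obtain ⟨hby, hay⟩ := hmemT hy
    rw [hFval a σ hbx, hFval b τ hby] at hne' ⊢
    by_cases hab : a = b
    · subst hab
      have hστ : σ ≠ τ := by
        intro hc
        subst hc
        exact hne' rfl
      exact dist_Phi_of_ne_σ d k hd hk hbx (hA σ hax τ hay hστ)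
    · exact dist_Phi_of_ne_a d k hd hk hbx hby σ τ (aN_ne_of_ne d k hab)
  -- injectivity on Tset ×ˢ A
  have hinj : Set.InjOn F ↑(Tset ×ˢ A) := by
    intro x hx y hy heq
    rw [Finset.mem_coe] at hx hy
    obtain ⟨a, σ⟩ := x
    obtain ⟨b, τ⟩ := y
    obtain ⟨hbx, hax⟩ := hmemT hx
    obtain ⟨hby, hay⟩ := hmemT hy
    rw [hFval a σ hbx, hFval b τ hby] at heq
    by_cases hab : a = b
    · subst hab
      have hστ : σ = τ := by
        by_contra hc
        have hex : ∃ i, σ i ≠ τ i := by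
          by_contra hall
          push_neg at hall
          exact hc (Equiv.ext hall)
        obtain ⟨i, hi⟩ := hex
        set p : Fin (d*k+d-1) := ⟨(i:ℕ), by have := i.isLt; omega⟩ with hp
        have hplt : (p:ℕ) < d*k-1 := i.isLt
        have happ := DFunLike.congr_fun heq p
        rw [Phi_apply, Phi_apply] at happ
        unfold phiFun at happ
        rw [dif_pos hplt, dif_pos hplt] at happ
        have hieq : (⟨(p:ℕ), hplt⟩ : Fin (d*k-1)) = i := Fin.val_injective rfl
        rw [hieq] at happ
        exact hi ((gmap d k hd hk hbx).injective happ)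
      rw [hστ]
    · exfalso
      have hdist := dist_Phi_of_ne_a d k hd hk hbx hby σ τ (aN_ne_of_ne d k hab)
      rw [heq, permDist_self] at hdist
      omega
  -- cardinalities
  have hcardB : B.card = Tset.card * A.card := by
    rw [hB, Finset.card_image_of_injOn hinj, Finset.card_product]
  have hcardT : (k+1)^d - Nat.choose (k + d - 1) (d - 1) ≤ Tset.card := by
    have h2 : Tset = Finset.univ \ (Finset.univ.filter (fun a : Fin d → Fin (k+1) => Bad d k a)) := by
      ext a
      simp [hT]
    have h3 : (Finset.univ.filter (fun a : Fin d → Fin (k+1) => Bad d k a)).card ≤ (k+1)^d := by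
      refine le_trans (Finset.card_le_univ _) ?_
      rw [Fintype.card_fun, Fintype.card_fin, Fintype.card_fin]
    have h4 := card_Bad_le d k hd hk
    rw [h2, Finset.card_sdiff_of_subset (Finset.filter_subset _ _), Finset.card_univ,
      Fintype.card_fun, Fintype.card_fin, Fintype.card_fin]
    omega
  -- conclude
  have hbdd2 : BddAbove ({c | ∃ A' : Finset (Equiv.Perm (Fin (d*k+d-1))),
      (∀ σ ∈ A', ∀ τ ∈ A', σ ≠ τ → d ≤ permDist σ τ) ∧ A'.card = c} : Set ℕ) := by
    refine ⟨Fintype.card (Equiv.Perm (Fin (d*k+d-1))), ?_⟩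
    rintro c ⟨A', _, rfl⟩
    exact le_trans (Finset.card_le_univ A') (le_of_eq Finset.card_univ)
  have hBmem : B.card ∈ ({c | ∃ A' : Finset (Equiv.Perm (Fin (d*k+d-1))),
      (∀ σ ∈ A', ∀ τ ∈ A', σ ≠ τ → d ≤ permDist σ τ) ∧ A'.card = c} : Set ℕ) :=
    ⟨B, hBdist, rfl⟩
  have hfinal : B.card ≤ P (d*k+d-1) d := le_csSup hbdd2 hBmem
  calc ((k + 1) ^ d - Nat.choose (k + d - 1) (d - 1)) * P (d * k - 1) d
      = ((k + 1) ^ d - Nat.choose (k + d - 1) (d - 1)) * A.card := by rw [hAcard]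
    _ ≤ Tset.card * A.card := Nat.mul_le_mul_right _ hcardT
    _ = B.card := hcardB.symm
    _ ≤ P (d * k + d - 1) d := hfinal
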